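/- arXiv:1704.02267 — 3 statements merged into one kernel-verified Lean document; each statement's English description precedes it below -/
import Mathlib

section
/- The TBT matrix T satisfies the matrix identity A_1 T − T A_1^* = i·(M_{11} M_{21} + M_{31} M_{41}). -/
open Matrix

noncomputable section

/-- The scalar sequence `a_r`: `0` for `r < 0`, `i/2` for `r = 0`, `i` for `r > 0`. -/
def aC (r : ℤ) : ℂ := if r < 0 then 0 else if r = 0 then Complex.I / 2 else Complex.I

/-- `A_1`: block matrix `{𝒜_{1,p−q}}` with blocks `0`, `(i/2)I_m`, `i·I_m`. -/
def A1 (m n : ℕ) : Matrix (Fin n × Fin m) (Fin n × Fin m) ℂ :=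
  Matrix.of fun r c => if r.2 = c.2 then aC (((r.1 : ℕ) : ℤ) - ((c.1 : ℕ) : ℤ)) else 0

/-- `A_2 = diag{𝒜_{2,0}, …, 𝒜_{2,0}}`. -/
def A2 (m n : ℕ) : Matrix (Fin n × Fin m) (Fin n × Fin m) ℂ :=
  Matrix.of fun r c => if r.1 = c.1 then aC (((r.2 : ℕ) : ℤ) - ((c.2 : ℕ) : ℤ)) else 0

/-- `𝒜_1 = {a_{j−ℓ}}_{j,ℓ=1}^n`. -/
def calA1 (n : ℕ) : Matrix (Fin n) (Fin n) ℂ :=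
  Matrix.of fun p q => aC (((p : ℕ) : ℤ) - ((q : ℕ) : ℤ))

/-- `𝒜_2 = {a_{j−ℓ}}_{j,ℓ=1}^m`. -/
def calA2 (m : ℕ) : Matrix (Fin m) (Fin m) ℂ :=
  Matrix.of fun j l => aC (((j : ℕ) : ℤ) - ((l : ℕ) : ℤ))

/-- The Toeplitz-block Toeplitz matrix `T`, entry `t_{p−q}^{(j−ℓ)}`. -/
def TBT (m n : ℕ) (t : ℤ → ℤ → ℂ) : Matrix (Fin n × Fin m) (Fin n × Fin m) ℂ :=
  Matrix.of fun r c =>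
    t (((r.1 : ℕ) : ℤ) - ((c.1 : ℕ) : ℤ)) (((r.2 : ℕ) : ℤ) - ((c.2 : ℕ) : ℤ))

/-- `M_{11}`: block column, `p`-th block `(1/2)𝒯_0 + Σ_{s=1}^{p−1} 𝒯_s`. -/
def M11 (m n : ℕ) (t : ℤ → ℤ → ℂ) : Matrix (Fin n × Fin m) (Fin m) ℂ :=
  Matrix.of fun r l => (1 / 2 : ℂ) * t 0 (((r.2 : ℕ) : ℤ) - ((l : ℕ) : ℤ))
    + ∑ s ∈ Finset.range (r.1 : ℕ), t ((s : ℤ) + 1) (((r.2 : ℕ) : ℤ) - ((l : ℕ) : ℤ))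

/-- `M_{21} = [I_m I_m … I_m]`. -/
def M21 (m n : ℕ) : Matrix (Fin m) (Fin n × Fin m) ℂ :=
  Matrix.of fun j c => if j = c.2 then 1 else 0

/-- `M_{31} = M_{21}^*`. -/
def M31 (m n : ℕ) : Matrix (Fin n × Fin m) (Fin m) ℂ := (M21 m n)ᴴ

/-- `M_{41}`: block row, `q`-th block `(1/2)𝒯_0 + Σ_{s=1}^{q−1} 𝒯_{−s}`. -/
def M41 (m n : ℕ) (t : ℤ → ℤ → ℂ) : Matrix (Fin m) (Fin n × Fin m) ℂ :=
  Matrix.of fun j c => (1 / 2 : ℂ) * t 0 (((j : ℕ) : ℤ) - ((c.2 : ℕ) : ℤ))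
    + ∑ s ∈ Finset.range (c.1 : ℕ), t (-((s : ℤ) + 1)) (((j : ℕ) : ℤ) - ((c.2 : ℕ) : ℤ))

/-- `j`-th entry of the column `ℳ_{12}^{(r)}`. -/
def m12e (m : ℕ) (t : ℤ → ℤ → ℂ) (r : ℤ) (j : Fin m) : ℂ :=
  (1 / 2 : ℂ) * t r 0 + ∑ s ∈ Finset.range (j : ℕ), t r ((s : ℤ) + 1)

/-- `ℓ`-th entry of the row `ℳ_{42}^{(r)}`. -/
def m42e (m : ℕ) (t : ℤ → ℤ → ℂ) (r : ℤ) (l : Fin m) : ℂ :=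
  (1 / 2 : ℂ) * t r 0 + ∑ s ∈ Finset.range (l : ℕ), t r (-((s : ℤ) + 1))

/-- `M_{12} = {ℳ_{12}^{(p−q)}}`. -/
def M12 (m n : ℕ) (t : ℤ → ℤ → ℂ) : Matrix (Fin n × Fin m) (Fin n) ℂ :=
  Matrix.of fun r q => m12e m t (((r.1 : ℕ) : ℤ) - ((q : ℕ) : ℤ)) r.2

/-- `M_{22}`. -/
def M22 (m n : ℕ) : Matrix (Fin n) (Fin n × Fin m) ℂ :=
  Matrix.of fun p c => if p = c.1 then 1 else 0

/-- `M_{32} = M_{22}^*`. -/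
def M32 (m n : ℕ) : Matrix (Fin n × Fin m) (Fin n) ℂ := (M22 m n)ᴴ

/-- `M_{42} = {ℳ_{42}^{(p−q)}}`. -/
def M42 (m n : ℕ) (t : ℤ → ℤ → ℂ) : Matrix (Fin n) (Fin n × Fin m) ℂ :=
  Matrix.of fun p c => m42e m t (((p : ℕ) : ℤ) - ((c.1 : ℕ) : ℤ)) c.2

/-- `K`: the `1×mn` row, `q`-th block `(1/2)ℳ_{42}^{(0)} + Σ_{s=1}^{q−1} ℳ_{42}^{(−s)}`. -/
def Krow (m n : ℕ) (t : ℤ → ℤ → ℂ) : (Fin n × Fin m) → ℂ :=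
  fun c => (1 / 2 : ℂ) * m42e m t 0 c.2
    + ∑ s ∈ Finset.range (c.1 : ℕ), m42e m t (-((s : ℤ) + 1)) c.2

/-- `K_{11}`: `p`-th row `(1/2)ℳ_{42}^{(0)} + Σ_{s=1}^{p−1} ℳ_{42}^{(s)}`. -/
def K11 (m n : ℕ) (t : ℤ → ℤ → ℂ) : Matrix (Fin n) (Fin m) ℂ :=
  Matrix.of fun p l => (1 / 2 : ℂ) * m42e m t 0 l
    + ∑ s ∈ Finset.range (p : ℕ), m42e m t ((s : ℤ) + 1) l

/-- `K_{12}`: `q`-th column `(1/2)ℳ_{12}^{(0)} + Σ_{s=1}^{q−1} ℳ_{12}^{(−s)}`. -/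
def K12 (m n : ℕ) (t : ℤ → ℤ → ℂ) : Matrix (Fin m) (Fin n) ℂ :=
  Matrix.of fun j q => (1 / 2 : ℂ) * m12e m t 0 j
    + ∑ s ∈ Finset.range (q : ℕ), m12e m t (-((s : ℤ) + 1)) j

/-- `Π_1 = [M_{11} M_{31}]`. -/
def Pi1 (m n : ℕ) (t : ℤ → ℤ → ℂ) : Matrix (Fin n × Fin m) (Fin m ⊕ Fin m) ℂ :=
  fromCols (M11 m n t) (M31 m n)

/-- `Π_2 = [M_{12} M_{32}]`. -/
def Pi2 (m n : ℕ) (t : ℤ → ℤ → ℂ) : Matrix (Fin n × Fin m) (Fin n ⊕ Fin n) ℂ :=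
  fromCols (M12 m n t) (M32 m n)

/-- `Π̂_1 = col[M_{21}; M_{41}]`. -/
def PiHat1 (m n : ℕ) (t : ℤ → ℤ → ℂ) : Matrix (Fin m ⊕ Fin m) (Fin n × Fin m) ℂ :=
  fromRows (M21 m n) (M41 m n t)

/-- `Π̂_2 = col[M_{22}; M_{42}]`. -/
def PiHat2 (m n : ℕ) (t : ℤ → ℤ → ℂ) : Matrix (Fin n ⊕ Fin n) (Fin n × Fin m) ℂ :=
  fromRows (M22 m n) (M42 m n t)

/-- All-ones vector. -/
def onesV (k : Type*) : k → ℂ := fun _ => 1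

/-- `g_{12} = i·Π̂_1 T^{-1} Π_2 − i·[[𝟏_m 𝟏_n^*, 0],[K_{12}, 0]]`. -/
def g12M (m n : ℕ) (t : ℤ → ℤ → ℂ) : Matrix (Fin m ⊕ Fin m) (Fin n ⊕ Fin n) ℂ :=
  Complex.I • (PiHat1 m n t * (TBT m n t)⁻¹ * Pi2 m n t)
    - Complex.I • fromBlocks (vecMulVec (onesV (Fin m)) (onesV (Fin n))) 0 (K12 m n t) 0

/-- `g_{21} = i·Π̂_2 T^{-1} Π_1 − i·[[𝟏_n 𝟏_m^*, 0],[K_{11}, 0]]`. -/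
def g21M (m n : ℕ) (t : ℤ → ℤ → ℂ) : Matrix (Fin n ⊕ Fin n) (Fin m ⊕ Fin m) ℂ :=
  Complex.I • (PiHat2 m n t * (TBT m n t)⁻¹ * Pi1 m n t)
    - Complex.I • fromBlocks (vecMulVec (onesV (Fin n)) (onesV (Fin m))) 0 (K11 m n t) 0

/-- The `k×k` flip (anti-diagonal) matrix. -/
def flipU (k : ℕ) : Matrix (Fin k) (Fin k) ℂ :=
  Matrix.of fun p q => if (p : ℕ) + (q : ℕ) + 1 = k then 1 else 0

/-- `U_{2k}`, the `2k×2k` flip matrix on the sum type. -/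
def U2 (k : ℕ) : Matrix (Fin k ⊕ Fin k) (Fin k ⊕ Fin k) ℂ :=
  fromBlocks 0 (flipU k) (flipU k) 0

/-- `J_{2k} = diag{I_k, −I_k}`. -/
def J2 (k : ℕ) : Matrix (Fin k ⊕ Fin k) (Fin k ⊕ Fin k) ℂ :=
  fromBlocks 1 0 0 (-1)

/-- `U = U_{mn}`, the `mn×mn` flip matrix (global index `m·p + j`). -/
def UmnM (m n : ℕ) : Matrix (Fin n × Fin m) (Fin n × Fin m) ℂ :=
  Matrix.of fun r c =>
    if m * (r.1 : ℕ) + (r.2 : ℕ) + (m * (c.1 : ℕ) + (c.2 : ℕ)) + 1 = m * n then 1 else 0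

/-- `ψ(λ) = (λ + i/2)/(λ − i/2)`. -/
def psiM (l : ℂ) : ℂ := (l + Complex.I / 2) / (l - Complex.I / 2)

/-- `h(y_1, y_2)`, entry `y_1^{p−1} y_2^{j−1}`. -/
def hVec (m n : ℕ) (y1 y2 : ℂ) : (Fin n × Fin m) → ℂ :=
  fun r => y1 ^ (r.1 : ℕ) * y2 ^ (r.2 : ℕ)

/-- `ω(λ,μ) = 𝟏^*(A_1^*−μ_1)^{-1}(A_2^*−μ_2)^{-1}T^{-1}(A_2−λ_2)^{-1}(A_1−λ_1)^{-1}𝟏`. -/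
def omegaF (m n : ℕ) (t : ℤ → ℤ → ℂ) (l1 l2 u1 u2 : ℂ) : ℂ :=
  star (onesV (Fin n × Fin m)) ⬝ᵥ
    ((((A1 m n)ᴴ - u1 • 1)⁻¹ * ((A2 m n)ᴴ - u2 • 1)⁻¹ * (TBT m n t)⁻¹ *
      (A2 m n - l2 • 1)⁻¹ * (A1 m n - l1 • 1)⁻¹) *ᵥ onesV (Fin n × Fin m))

/-- `ρ(y,z) = h(conj z_1, conj z_2)^* T^{-1} h(y_1,y_2)`. -/
def rhoF (m n : ℕ) (t : ℤ → ℤ → ℂ) (y1 y2 z1 z2 : ℂ) : ℂ :=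
  star (hVec m n ((starRingEnd ℂ) z1) ((starRingEnd ℂ) z2)) ⬝ᵥ
    ((TBT m n t)⁻¹ *ᵥ hVec m n y1 y2)

/-- `Γ_1 = T^{-1}Π_1`. -/
def Gam1 (m n : ℕ) (t : ℤ → ℤ → ℂ) : Matrix (Fin n × Fin m) (Fin m ⊕ Fin m) ℂ :=
  (TBT m n t)⁻¹ * Pi1 m n t

/-- `Γ_2 = T^{-1}Π_2`. -/
def Gam2 (m n : ℕ) (t : ℤ → ℤ → ℂ) : Matrix (Fin n × Fin m) (Fin n ⊕ Fin n) ℂ :=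
  (TBT m n t)⁻¹ * Pi2 m n t

/-- `Γ̂_1 = Π̂_1 T^{-1}`. -/
def GamHat1 (m n : ℕ) (t : ℤ → ℤ → ℂ) : Matrix (Fin m ⊕ Fin m) (Fin n × Fin m) ℂ :=
  PiHat1 m n t * (TBT m n t)⁻¹

/-- `Γ̂_2 = Π̂_2 T^{-1}`. -/
def GamHat2 (m n : ℕ) (t : ℤ → ℤ → ℂ) : Matrix (Fin n ⊕ Fin n) (Fin n × Fin m) ℂ :=
  PiHat2 m n t * (TBT m n t)⁻¹

/-- `Γ = [Γ_1 Γ_2]`. -/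
def GammaFull (m n : ℕ) (t : ℤ → ℤ → ℂ) :
    Matrix (Fin n × Fin m) ((Fin m ⊕ Fin m) ⊕ (Fin n ⊕ Fin n)) ℂ :=
  fromCols (Gam1 m n t) (Gam2 m n t)

/-- `Γ̂ = col[Γ̂_1; Γ̂_2]`. -/
def GammaHatFull (m n : ℕ) (t : ℤ → ℤ → ℂ) :
    Matrix ((Fin m ⊕ Fin m) ⊕ (Fin n ⊕ Fin n)) (Fin n × Fin m) ℂ :=
  fromRows (GamHat1 m n t) (GamHat2 m n t)

/-- The row vector `u(μ)`. -/
def uRow (m n : ℕ) (t : ℤ → ℤ → ℂ) (u1 u2 : ℂ) :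
    ((Fin m ⊕ Fin m) ⊕ (Fin n ⊕ Fin n)) → ℂ :=
  star (onesV (Fin n × Fin m)) ᵥ*
      (((A1 m n)ᴴ - u1 • 1)⁻¹ * ((A2 m n)ᴴ - u2 • 1)⁻¹ * GammaFull m n t)
    - Complex.I • Sum.elim
        (Sum.elim (star (onesV (Fin m)) ᵥ* ((calA2 m)ᴴ - u2 • 1)⁻¹) (0 : Fin m → ℂ))
        (Sum.elim (star (onesV (Fin n)) ᵥ* ((calA1 n)ᴴ - u1 • 1)⁻¹) (0 : Fin n → ℂ))

/-- The column vector `û(λ)`. -/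
def uHatCol (m n : ℕ) (t : ℤ → ℤ → ℂ) (l1 l2 : ℂ) :
    ((Fin m ⊕ Fin m) ⊕ (Fin n ⊕ Fin n)) → ℂ :=
  (GammaHatFull m n t * (A2 m n - l2 • 1)⁻¹ * (A1 m n - l1 • 1)⁻¹) *ᵥ onesV (Fin n × Fin m)
    + Complex.I • Sum.elim
        (Sum.elim (0 : Fin m → ℂ) ((calA2 m - l2 • 1)⁻¹ *ᵥ onesV (Fin m)))
        (Sum.elim (0 : Fin n → ℂ) ((calA1 n - l1 • 1)⁻¹ *ᵥ onesV (Fin n)))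

/-- `P_1 = diag{I_{2m}, 0}`. -/
def P1M (m n : ℕ) :
    Matrix ((Fin m ⊕ Fin m) ⊕ (Fin n ⊕ Fin n)) ((Fin m ⊕ Fin m) ⊕ (Fin n ⊕ Fin n)) ℂ :=
  fromBlocks 1 0 0 0

/-- `P_2 = I − P_1`. -/
def P2M (m n : ℕ) :
    Matrix ((Fin m ⊕ Fin m) ⊕ (Fin n ⊕ Fin n)) ((Fin m ⊕ Fin m) ⊕ (Fin n ⊕ Fin n)) ℂ :=
  1 - P1M m n

/-- `G(λ)`, built from `g_{12}` and `g_{21}`. -/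
def GMat (m n : ℕ) (g12 : Matrix (Fin m ⊕ Fin m) (Fin n ⊕ Fin n) ℂ)
    (g21 : Matrix (Fin n ⊕ Fin n) (Fin m ⊕ Fin m) ℂ) (l1 l2 : ℂ) :
    Matrix ((Fin m ⊕ Fin m) ⊕ (Fin n ⊕ Fin n)) ((Fin m ⊕ Fin m) ⊕ (Fin n ⊕ Fin n)) ℂ :=
  fromBlocks (fromBlocks (calA2 m - l2 • 1) 0 0 (calA2 m - l2 • 1)) g12
             g21 (fromBlocks (calA1 n - l1 • 1) 0 0 (calA1 n - l1 • 1))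

/-- `G` as a matrix over the polynomial ring `ℂ[λ_1, λ_2]` (variables `X 0 = λ_1`, `X 1 = λ_2`). -/
def GPoly (m n : ℕ) (g12 : Matrix (Fin m ⊕ Fin m) (Fin n ⊕ Fin n) ℂ)
    (g21 : Matrix (Fin n ⊕ Fin n) (Fin m ⊕ Fin m) ℂ) :
    Matrix ((Fin m ⊕ Fin m) ⊕ (Fin n ⊕ Fin n)) ((Fin m ⊕ Fin m) ⊕ (Fin n ⊕ Fin n))
      (MvPolynomial (Fin 2) ℂ) :=
  fromBlocks
    (fromBlocks ((calA2 m).map MvPolynomial.C - (MvPolynomial.X 1 : MvPolynomial (Fin 2) ℂ) • 1) 0 0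
      ((calA2 m).map MvPolynomial.C - (MvPolynomial.X 1 : MvPolynomial (Fin 2) ℂ) • 1))
    (g12.map MvPolynomial.C)
    (g21.map MvPolynomial.C)
    (fromBlocks ((calA1 n).map MvPolynomial.C - (MvPolynomial.X 0 : MvPolynomial (Fin 2) ℂ) • 1) 0 0
      ((calA1 n).map MvPolynomial.C - (MvPolynomial.X 0 : MvPolynomial (Fin 2) ℂ) • 1))

/-- The vector `col[0_m; 𝟏_m; 0_n; 𝟏_n]`. -/
def eVec (m n : ℕ) : ((Fin m ⊕ Fin m) ⊕ (Fin n ⊕ Fin n)) → ℂ :=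
  Sum.elim (Sum.elim (0 : Fin m → ℂ) (onesV (Fin m))) (Sum.elim (0 : Fin n → ℂ) (onesV (Fin n)))

/-- `diag{J_{2m}U_{2m}, J_{2n}U_{2n}}`. -/
def DJU (m n : ℕ) :
    Matrix ((Fin m ⊕ Fin m) ⊕ (Fin n ⊕ Fin n)) ((Fin m ⊕ Fin m) ⊕ (Fin n ⊕ Fin n)) ℂ :=
  fromBlocks (J2 m * U2 m) 0 0 (J2 n * U2 n)

/-- The block column `col[I_m; I_m; …; I_m]`. -/
def EcolId (m n : ℕ) : Matrix (Fin n × Fin m) (Fin m) ℂ :=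
  Matrix.of fun r l => if r.2 = l then 1 else 0

lemma conj_aC (r : ℤ) : (starRingEnd ℂ) (aC r) = -aC r := by
  unfold aC; split_ifs <;> simp [Complex.conj_I, map_div₀, map_ofNat, neg_div]

lemma key_sum (f : ℤ → ℂ) (p q : ℕ) :
    f ((p:ℤ) - q) + ((∑ s ∈ Finset.range p, f ((s:ℤ) - q))
        + ∑ s ∈ Finset.range q, f ((p:ℤ) - (s:ℤ)))
      = f 0 + ((∑ s ∈ Finset.range p, f ((s:ℤ) + 1))
        + ∑ s ∈ Finset.range q, f (-((s:ℤ) + 1))) := by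
  induction q with
  | zero =>
    simp only [Nat.cast_zero, sub_zero, Finset.range_zero, Finset.sum_empty, add_zero]
    have h1 := Finset.sum_range_succ (fun s : ℕ => f (s:ℤ)) p
    have h2 := Finset.sum_range_succ' (fun s : ℕ => f (s:ℤ)) p
    have h3 : ∑ s ∈ Finset.range p, f (((s+1:ℕ)):ℤ) = ∑ s ∈ Finset.range p, f ((s:ℤ)+1) :=
      Finset.sum_congr rfl fun s _ => by congr 1 <;> push_cast <;> ring
    rw [h3] at h2
    simp only [Nat.cast_zero] at h2
    linear_combination h2 - h1
  | succ q ih =>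
    have h1 := Finset.sum_range_succ (fun s : ℕ => f ((s:ℤ) - (q+1:ℕ))) p
    have h2 := Finset.sum_range_succ' (fun s : ℕ => f ((s:ℤ) - (q+1:ℕ))) p
    have h3 : ∑ s ∈ Finset.range p, f (((s+1:ℕ):ℤ) - (q+1:ℕ)) = ∑ s ∈ Finset.range p, f ((s:ℤ) - q) :=
      Finset.sum_congr rfl fun s _ => by congr 1 <;> push_cast <;> ring
    rw [h3] at h2
    have h4 : f (((0:ℕ):ℤ) - (q+1:ℕ)) = f (-((q:ℤ)+1)) := by congr 1 <;> push_cast <;> ring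
    rw [h4] at h2
    rw [Finset.sum_range_succ (fun s : ℕ => f ((p:ℤ) - s)) q,
        Finset.sum_range_succ (fun s : ℕ => f (-((s:ℤ)+1))) q]
    have h5 : ((q+1:ℕ):ℤ) = (q:ℤ)+1 := by push_cast; ring
    rw [h5] at h1 h2 ⊢
    linear_combination ih - h1 + h2

lemma sumA (n : ℕ) (p : Fin n) (f : ℤ → ℂ) :
    ∑ x : Fin n, aC (((p:ℕ):ℤ) - ((x:ℕ):ℤ)) * f ((x:ℕ):ℤ)
      = Complex.I/2 * f ((p:ℕ):ℤ)
        + Complex.I * ∑ s ∈ Finset.range (p:ℕ), f ((s:ℤ)) := by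
  rw [Fin.sum_univ_eq_sum_range (fun x : ℕ => aC (((p:ℕ):ℤ) - (x:ℤ)) * f (x:ℤ)) n]
  have hsub : Finset.range ((p:ℕ)+1) ⊆ Finset.range n := by
    apply Finset.range_subset_range.2; omega
  rw [← Finset.sum_subset hsub (by
    intro x hx hx'
    simp only [Finset.mem_range] at hx hx'
    have : (((p:ℕ):ℤ) - (x:ℤ)) < 0 := by omega
    simp [aC, this])]
  rw [Finset.sum_range_succ]
  have h0 : aC (((p:ℕ):ℤ) - ((p:ℕ):ℤ)) = Complex.I/2 := by simp [aC]
  rw [h0]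
  have h1 : ∀ s ∈ Finset.range (p:ℕ), aC (((p:ℕ):ℤ) - (s:ℤ)) * f (s:ℤ) = Complex.I * f (s:ℤ) := by
    intro s hs
    simp only [Finset.mem_range] at hs
    have h2 : ¬ (((p:ℕ):ℤ) - (s:ℤ) < 0) := by omega
    have h3 : ¬ (((p:ℕ):ℤ) - (s:ℤ) = 0) := by omega
    simp [aC, h2, h3]
  rw [Finset.sum_congr rfl h1, ← Finset.mul_sum]
  ring

lemma sumA' (n : ℕ) (p : Fin n) (f : ℤ → ℂ) :
    ∑ x : Fin n, f ((x:ℕ):ℤ) * aC (((p:ℕ):ℤ) - ((x:ℕ):ℤ))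
      = Complex.I/2 * f ((p:ℕ):ℤ)
        + Complex.I * ∑ s ∈ Finset.range (p:ℕ), f ((s:ℤ)) := by
  rw [← sumA n p f]
  exact Finset.sum_congr rfl fun x _ => mul_comm _ _

/-- `A_1 T − T A_1^* = i(M_{11}M_{21} + M_{31}M_{41})`. -/
theorem tbt_identity_A1 (m n : ℕ) (hm : 0 < m) (hn : 0 < n) (t : ℤ → ℤ → ℂ) :
    A1 m n * TBT m n t - TBT m n t * (A1 m n)ᴴ
      = Complex.I • (M11 m n t * M21 m n + M31 m n * M41 m n t) := by
  ext ⟨p, j⟩ ⟨q, l⟩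
  simp only [Matrix.sub_apply, Matrix.mul_apply, Matrix.smul_apply, Matrix.add_apply,
    Matrix.conjTranspose_apply, A1, TBT, M11, M21, M31, M41, Matrix.of_apply,
    Fintype.sum_prod_type, smul_eq_mul]
  simp only [ite_mul, mul_ite, mul_zero, zero_mul, mul_one, one_mul, apply_ite (starRingEnd ℂ), _root_.map_zero, _root_.map_one, Finset.sum_ite_eq, Finset.sum_ite_eq', Finset.mem_univ, if_true,
    Complex.star_def, conj_aC, mul_neg, Finset.sum_neg_distrib, sub_neg_eq_add]
  rw [sumA n p (fun y => t (y - ((q:ℕ):ℤ)) (((j:ℕ):ℤ) - ((l:ℕ):ℤ))),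
      sumA' n q (fun y => t (((p:ℕ):ℤ) - y) (((j:ℕ):ℤ) - ((l:ℕ):ℤ)))]
  linear_combination Complex.I * key_sum (fun r => t r (((j:ℕ):ℤ) - ((l:ℕ):ℤ))) (p:ℕ) (q:ℕ)

end
end

section
/- For the TBT matrix T, the matrices Q_1 = A_1 T − T A_1^* and Q_2 = A_2 T − T A_2^* satisfy rank(Q_1) ≤ 2m and rank(Q_2) ≤ 2n. -/
open Matrix

noncomputable section

/-! ### Auxiliary lemmas for the rank bounds -/

private lemma tbtaux_star_aC (r : ℤ) : star (aC r) = - aC r := by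
  unfold aC; split_ifs <;> simp [Complex.conj_I, neg_div, map_ofNat]

private lemma tbtaux_shift_sum (g : ℤ → ℂ) (p : ℕ) :
    ∑ k ∈ Finset.range p, g ((k:ℤ) - 1)
      = g (-1) - g ((p:ℤ) - 1) + ∑ k ∈ Finset.range p, g (k:ℤ) := by
  induction p with
  | zero => simp
  | succ p ih =>
    rw [Finset.sum_range_succ, Finset.sum_range_succ, ih]
    push_cast
    ring_nf

private lemma tbtaux_sumA (f : ℕ → ℂ) {p n : ℕ} (hp : p < n) :
    ∑ k ∈ Finset.range n, aC ((p:ℤ) - k) * f k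
      = Complex.I * ((1/2) * f p + ∑ k ∈ Finset.range p, f k) := by
  rw [← Finset.sum_subset (Finset.range_subset_range.2 hp)
    (fun k _ hk' => by
      have hk : ¬ k < p + 1 := by simpa [Finset.mem_range] using hk'
      have h0 : ((p:ℤ) - k) < 0 := by omega
      rw [aC, if_pos h0, zero_mul])]
  have hc : ∀ k ∈ Finset.range p, aC ((p:ℤ) - k) * f k = Complex.I * f k := by
    intro k hk
    have hk' := Finset.mem_range.1 hk
    have h1 : ¬ ((p:ℤ) - k) < 0 := by omega
    have h2 : ¬ ((p:ℤ) - k) = 0 := by omega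
    rw [aC, if_neg h1, if_neg h2]
  rw [Finset.sum_range_succ, Finset.sum_congr rfl hc, ← Finset.mul_sum, aC]
  have h1 : ¬ ((p:ℤ) - p) < 0 := by omega
  have h2 : ((p:ℤ) - p) = 0 := by omega
  rw [if_neg h1, if_pos h2]
  ring

private lemma tbtaux_sumB (f : ℕ → ℂ) {p n : ℕ} (hp : p < n) :
    ∑ k ∈ Finset.range n, f k * aC ((p:ℤ) - k)
      = Complex.I * ((1/2) * f p + ∑ k ∈ Finset.range p, f k) := by
  simpa [mul_comm] using tbtaux_sumA f hp

private lemma tbtaux_key (t' : ℤ → ℂ) (p q : ℕ) :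
    t' ((p:ℤ) - q) + (∑ k ∈ Finset.range p, t' ((k:ℤ) - q))
        + (∑ k ∈ Finset.range q, t' ((p:ℤ) - k))
      = (∑ k ∈ Finset.range (p+1), t' (k:ℤ))
        + (∑ k ∈ Finset.range q, t' (-((k:ℤ)+1))) := by
  induction q with
  | zero => simp [Finset.sum_range_succ, add_comm]
  | succ q ih =>
    have e1 : ∑ k ∈ Finset.range p, t' ((k:ℤ) - (q+1:ℕ))
        = t' (-1 - q) - t' ((p:ℤ) - 1 - q) + ∑ k ∈ Finset.range p, t' ((k:ℤ) - q) := by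
      have h := tbtaux_shift_sum (fun x => t' (x - q)) p
      calc ∑ k ∈ Finset.range p, t' ((k:ℤ) - (q+1:ℕ))
          = ∑ k ∈ Finset.range p, t' ((k:ℤ) - 1 - q) :=
            Finset.sum_congr rfl (fun k _ => by congr 1; push_cast; ring)
        _ = _ := h
    rw [Finset.sum_range_succ (fun k => t' ((p:ℤ) - k)) q,
        Finset.sum_range_succ (fun k => t' (-((k:ℤ)+1))) q, e1]
    have e2 : t' ((p:ℤ) - (q+1:ℕ)) = t' ((p:ℤ) - 1 - q) := by congr 1; push_cast; ring
    have e3 : t' (-1 - (q:ℤ)) = t' (-((q:ℤ)+1)) := by congr 1; ring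
    rw [e2, e3]
    linear_combination ih

private lemma tbtaux_Q1_entry (m n : ℕ) (t : ℤ → ℤ → ℂ) (r c : Fin n × Fin m) :
    (A1 m n * TBT m n t - TBT m n t * (A1 m n)ᴴ) r c
      = Complex.I * ((∑ k ∈ Finset.range ((r.1:ℕ)+1), t (k:ℤ) (((r.2:ℕ):ℤ) - ((c.2:ℕ):ℤ)))
          + ∑ k ∈ Finset.range (c.1:ℕ), t (-((k:ℤ)+1)) (((r.2:ℕ):ℤ) - ((c.2:ℕ):ℤ))) := by
  obtain ⟨p, j⟩ := r
  obtain ⟨q, l⟩ := c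
  simp only [Matrix.sub_apply, Matrix.mul_apply, Fintype.sum_prod_type, A1, TBT,
    Matrix.conjTranspose_apply, Matrix.of_apply, ite_mul, mul_ite, zero_mul, mul_zero,
    apply_ite (star : ℂ → ℂ), tbtaux_star_aC, star_zero, mul_neg, Finset.sum_neg_distrib,
    sub_neg_eq_add, Finset.sum_ite_eq, Finset.mem_univ, if_true]
  rw [Fin.sum_univ_eq_sum_range
      (fun k : ℕ => aC ((p:ℤ) - k) * t ((k:ℤ) - q) (((j:ℕ):ℤ) - ((l:ℕ):ℤ))) n,
    Fin.sum_univ_eq_sum_range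
      (fun k : ℕ => t ((p:ℤ) - k) (((j:ℕ):ℤ) - ((l:ℕ):ℤ)) * aC ((q:ℤ) - k)) n,
    tbtaux_sumA _ p.isLt, tbtaux_sumB _ q.isLt]
  linear_combination Complex.I * tbtaux_key (fun x => t x (((j:ℕ):ℤ) - ((l:ℕ):ℤ))) p q

private lemma tbtaux_Q2_entry (m n : ℕ) (t : ℤ → ℤ → ℂ) (r c : Fin n × Fin m) :
    (A2 m n * TBT m n t - TBT m n t * (A2 m n)ᴴ) r c
      = Complex.I * ((∑ k ∈ Finset.range ((r.2:ℕ)+1), t (((r.1:ℕ):ℤ) - ((c.1:ℕ):ℤ)) (k:ℤ))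
          + ∑ k ∈ Finset.range (c.2:ℕ), t (((r.1:ℕ):ℤ) - ((c.1:ℕ):ℤ)) (-((k:ℤ)+1))) := by
  obtain ⟨p, j⟩ := r
  obtain ⟨q, l⟩ := c
  simp only [Matrix.sub_apply, Matrix.mul_apply, Fintype.sum_prod_type, A2, TBT,
    Matrix.conjTranspose_apply, Matrix.of_apply, ite_mul, mul_ite, zero_mul, mul_zero,
    apply_ite (star : ℂ → ℂ), tbtaux_star_aC, star_zero, mul_neg, Finset.sum_neg_distrib,
    sub_neg_eq_add, Finset.sum_ite_irrel, Finset.sum_const_zero,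
    Finset.sum_ite_eq, Finset.mem_univ, if_true]
  rw [Fin.sum_univ_eq_sum_range
      (fun k : ℕ => aC ((j:ℤ) - k) * t (((p:ℕ):ℤ) - ((q:ℕ):ℤ)) ((k:ℤ) - l)) m,
    Fin.sum_univ_eq_sum_range
      (fun k : ℕ => t (((p:ℕ):ℤ) - ((q:ℕ):ℤ)) ((j:ℤ) - k) * aC ((l:ℤ) - k)) m,
    tbtaux_sumA _ j.isLt, tbtaux_sumB _ l.isLt]
  linear_combination Complex.I * tbtaux_key (fun x => t (((p:ℕ):ℤ) - ((q:ℕ):ℤ)) x) j l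

/-- Left factor for `Q_1`. -/
private def tbtauxB1 (m n : ℕ) (t : ℤ → ℤ → ℂ) :
    Matrix (Fin n × Fin m) (Fin m ⊕ Fin m) ℂ :=
  Matrix.of fun r x => Sum.elim
    (fun l' : Fin m => Complex.I *
      ∑ k ∈ Finset.range ((r.1:ℕ)+1), t (k:ℤ) (((r.2:ℕ):ℤ) - ((l':ℕ):ℤ)))
    (fun j' : Fin m => if r.2 = j' then (1:ℂ) else 0) x

/-- Right factor for `Q_1`. -/
private def tbtauxC1 (m n : ℕ) (t : ℤ → ℤ → ℂ) :
    Matrix (Fin m ⊕ Fin m) (Fin n × Fin m) ℂ :=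
  Matrix.of fun x c => Sum.elim
    (fun l' : Fin m => if l' = c.2 then (1:ℂ) else 0)
    (fun j' : Fin m => Complex.I *
      ∑ k ∈ Finset.range (c.1:ℕ), t (-((k:ℤ)+1)) (((j':ℕ):ℤ) - ((c.2:ℕ):ℤ))) x

/-- Left factor for `Q_2`. -/
private def tbtauxB2 (m n : ℕ) (t : ℤ → ℤ → ℂ) :
    Matrix (Fin n × Fin m) (Fin n ⊕ Fin n) ℂ :=
  Matrix.of fun r x => Sum.elim
    (fun q' : Fin n => Complex.I *
      ∑ k ∈ Finset.range ((r.2:ℕ)+1), t (((r.1:ℕ):ℤ) - ((q':ℕ):ℤ)) (k:ℤ))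
    (fun p' : Fin n => if r.1 = p' then (1:ℂ) else 0) x

/-- Right factor for `Q_2`. -/
private def tbtauxC2 (m n : ℕ) (t : ℤ → ℤ → ℂ) :
    Matrix (Fin n ⊕ Fin n) (Fin n × Fin m) ℂ :=
  Matrix.of fun x c => Sum.elim
    (fun q' : Fin n => if q' = c.1 then (1:ℂ) else 0)
    (fun p' : Fin n => Complex.I *
      ∑ k ∈ Finset.range (c.2:ℕ), t (((p':ℕ):ℤ) - ((c.1:ℕ):ℤ)) (-((k:ℤ)+1))) x

private lemma tbtaux_fact1 (m n : ℕ) (t : ℤ → ℤ → ℂ) :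
    A1 m n * TBT m n t - TBT m n t * (A1 m n)ᴴ = tbtauxB1 m n t * tbtauxC1 m n t := by
  ext r c
  rw [tbtaux_Q1_entry, Matrix.mul_apply, Fintype.sum_sum_type]
  simp only [tbtauxB1, tbtauxC1, Matrix.of_apply, Sum.elim_inl, Sum.elim_inr,
    mul_ite, ite_mul, mul_one, mul_zero, one_mul, zero_mul,
    Finset.sum_ite_eq, Finset.sum_ite_eq', Finset.mem_univ, if_true]
  ring

private lemma tbtaux_fact2 (m n : ℕ) (t : ℤ → ℤ → ℂ) :
    A2 m n * TBT m n t - TBT m n t * (A2 m n)ᴴ = tbtauxB2 m n t * tbtauxC2 m n t := by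
  ext r c
  rw [tbtaux_Q2_entry, Matrix.mul_apply, Fintype.sum_sum_type]
  simp only [tbtauxB2, tbtauxC2, Matrix.of_apply, Sum.elim_inl, Sum.elim_inr,
    mul_ite, ite_mul, mul_one, mul_zero, one_mul, zero_mul,
    Finset.sum_ite_eq, Finset.sum_ite_eq', Finset.mem_univ, if_true]
  ring

/-- `rank(Q_1) ≤ 2m` and `rank(Q_2) ≤ 2n`. -/
theorem tbt_rank_bounds (m n : ℕ) (hm : 0 < m) (hn : 0 < n) (t : ℤ → ℤ → ℂ) :
    (A1 m n * TBT m n t - TBT m n t * (A1 m n)ᴴ).rank ≤ 2 * m ∧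
    (A2 m n * TBT m n t - TBT m n t * (A2 m n)ᴴ).rank ≤ 2 * n := by
  constructor
  · calc (A1 m n * TBT m n t - TBT m n t * (A1 m n)ᴴ).rank
        = (tbtauxB1 m n t * tbtauxC1 m n t).rank := by rw [tbtaux_fact1]
      _ ≤ (tbtauxB1 m n t).rank := Matrix.rank_mul_le_left _ _
      _ ≤ Fintype.card (Fin m ⊕ Fin m) := Matrix.rank_le_card_width _
      _ = 2 * m := by simp [two_mul]
  · calc (A2 m n * TBT m n t - TBT m n t * (A2 m n)ᴴ).rank
        = (tbtauxB2 m n t * tbtauxC2 m n t).rank := by rw [tbtaux_fact2]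
      _ ≤ (tbtauxB2 m n t).rank := Matrix.rank_mul_le_left _ _
      _ ≤ Fintype.card (Fin n ⊕ Fin n) := Matrix.rank_le_card_width _
      _ = 2 * n := by simp [two_mul]

end
end

section
/- For all complex λ1 ≠ i/2 and λ2 ≠ i/2, the matrices A_1 − λ1·I and A_2 − λ2·I are invertible and (i/2 − λ2)(i/2 − λ1)·(A_2 − λ2 I)^{-1}(A_1 − λ1 I)^{-1}·𝟏 = h(ψ(λ1), ψ(λ2)), where ψ(λ) = (λ + i/2)/(λ − i/2). -/
open Matrix

noncomputable section

lemma aC_zero : aC 0 = Complex.I / 2 := by simp [aC]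

lemma aC_neg {r : ℤ} (h : r < 0) : aC r = 0 := by simp [aC, h]

lemma aC_pos {r : ℤ} (h : 0 < r) : aC r = Complex.I := by
  unfold aC; rw [if_neg (by omega), if_neg (by omega)]

lemma sum_aC_pow (N p : ℕ) (hp : p < N) (x : ℂ) :
    ∑ q ∈ Finset.range N, aC ((p : ℤ) - (q : ℤ)) * x ^ q
      = Complex.I / 2 * x ^ p + Complex.I * ∑ q ∈ Finset.range p, x ^ q := by
  rw [← Finset.sum_subset (Finset.range_subset_range.mpr hp)
    (fun q hq hq2 => by
      have h1 : q < N := Finset.mem_range.mp hq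
      have h2 : ¬ q < p + 1 := fun h => hq2 (Finset.mem_range.mpr h)
      rw [aC_neg (by omega), zero_mul])]
  rw [Finset.sum_range_succ, sub_self, aC_zero]
  rw [Finset.sum_congr rfl (fun q hq => by
    have : q < p := Finset.mem_range.mp hq
    rw [aC_pos (by omega)]), ← Finset.mul_sum]
  ring

lemma psi_key (l : ℂ) (hl : l ≠ Complex.I / 2) (p : ℕ) :
    Complex.I / 2 * psiM l ^ p + Complex.I * ∑ q ∈ Finset.range p, psiM l ^ q
      - l * psiM l ^ p = Complex.I / 2 - l := by
  have hd : l - Complex.I / 2 ≠ 0 := sub_ne_zero.mpr hl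
  have hpsi : psiM l * (l - Complex.I / 2) = l + Complex.I / 2 := div_mul_cancel₀ _ hd
  induction p with
  | zero => simp
  | succ p ih =>
    rw [Finset.sum_range_succ]
    linear_combination ih - (psiM l ^ p) * hpsi

lemma A1_mulVec (m n : ℕ) (v : Fin n × Fin m → ℂ) (p : Fin n) (j : Fin m) :
    (A1 m n *ᵥ v) (p, j) = ∑ q : Fin n, aC ((p : ℤ) - (q : ℤ)) * v (q, j) := by
  simp [A1, mulVec, dotProduct, Fintype.sum_prod_type, ite_mul, Finset.sum_ite_eq, Finset.sum_ite_eq']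

lemma A2_mulVec (m n : ℕ) (v : Fin n × Fin m → ℂ) (p : Fin n) (j : Fin m) :
    (A2 m n *ᵥ v) (p, j) = ∑ l : Fin m, aC ((j : ℤ) - (l : ℤ)) * v (p, l) := by
  simp [A2, mulVec, dotProduct, Fintype.sum_prod_type, ite_mul, Finset.sum_ite_eq, Finset.sum_ite_eq']

lemma A1_mulVec_h (m n : ℕ) (l1 : ℂ) (hl1 : l1 ≠ Complex.I / 2) (y2 : ℂ) :
    (A1 m n - l1 • 1) *ᵥ hVec m n (psiM l1) y2
      = (Complex.I / 2 - l1) • hVec m n 1 y2 := by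
  funext r
  obtain ⟨p, j⟩ := r
  rw [sub_mulVec, smul_mulVec, one_mulVec]
  simp only [Pi.sub_apply, Pi.smul_apply, smul_eq_mul]
  rw [A1_mulVec]
  have : ∀ q : Fin n, aC ((p : ℤ) - (q : ℤ)) * hVec m n (psiM l1) y2 (q, j)
      = (aC ((p : ℤ) - (q : ℤ)) * psiM l1 ^ (q : ℕ)) * y2 ^ (j : ℕ) := by
    intro q; simp [hVec]; ring
  rw [Finset.sum_congr rfl (fun q _ => this q), ← Finset.sum_mul,
    Fin.sum_univ_eq_sum_range (fun q => aC ((p : ℤ) - (q : ℤ)) * psiM l1 ^ q) n,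
    sum_aC_pow n p p.isLt]
  simp only [hVec]
  linear_combination (y2 ^ (j : ℕ)) * psi_key l1 hl1 (p : ℕ)

lemma A2_mulVec_h (m n : ℕ) (l2 : ℂ) (hl2 : l2 ≠ Complex.I / 2) (y1 : ℂ) :
    (A2 m n - l2 • 1) *ᵥ hVec m n y1 (psiM l2)
      = (Complex.I / 2 - l2) • hVec m n y1 1 := by
  funext r
  obtain ⟨p, j⟩ := r
  rw [sub_mulVec, smul_mulVec, one_mulVec]
  simp only [Pi.sub_apply, Pi.smul_apply, smul_eq_mul]
  rw [A2_mulVec]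
  have : ∀ l : Fin m, aC ((j : ℤ) - (l : ℤ)) * hVec m n y1 (psiM l2) (p, l)
      = (aC ((j : ℤ) - (l : ℤ)) * psiM l2 ^ (l : ℕ)) * y1 ^ (p : ℕ) := by
    intro l; simp [hVec]; ring
  rw [Finset.sum_congr rfl (fun l _ => this l), ← Finset.sum_mul,
    Fin.sum_univ_eq_sum_range (fun l => aC ((j : ℤ) - (l : ℤ)) * psiM l2 ^ l) m,
    sum_aC_pow m j j.isLt]
  simp only [hVec]
  linear_combination (y1 ^ (p : ℕ)) * psi_key l2 hl2 (j : ℕ)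

lemma isUnit_A1_sub (m n : ℕ) (l1 : ℂ) (hl1 : l1 ≠ Complex.I / 2) :
    IsUnit (A1 m n - l1 • 1) := by
  have hc : Complex.I / 2 - l1 ≠ 0 := sub_ne_zero.mpr (Ne.symm hl1)
  rw [Matrix.isUnit_iff_isUnit_det, isUnit_iff_ne_zero]
  intro hdet
  obtain ⟨v, hv0, hv⟩ := (Matrix.exists_mulVec_eq_zero_iff).mpr hdet
  apply hv0
  have key : ∀ k : ℕ, ∀ p : Fin n, (p : ℕ) = k → ∀ j : Fin m, v (p, j) = 0 := by
    intro k
    induction k using Nat.strong_induction_on with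
    | _ k ih =>
      intro p hpk j
      have h := congrFun hv (p, j)
      rw [sub_mulVec] at h
      simp only [Pi.sub_apply, Pi.zero_apply, smul_mulVec, one_mulVec,
        Pi.smul_apply, smul_eq_mul] at h
      rw [A1_mulVec] at h
      have hsum : ∑ q : Fin n, aC ((p : ℤ) - (q : ℤ)) * v (q, j)
          = Complex.I / 2 * v (p, j) := by
        rw [Finset.sum_eq_single p]
        · rw [sub_self, aC_zero]
        · intro q _ hq
          rcases lt_or_gt_of_ne (fun h' : (q : ℕ) = (p : ℕ) => hq (Fin.ext h'))
            with h' | h'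
          · rw [ih (q : ℕ) (by omega) q rfl j, mul_zero]
          · rw [aC_neg (by omega), zero_mul]
        · intro h'; exact absurd (Finset.mem_univ p) h'
      rw [hsum] at h
      have : (Complex.I / 2 - l1) * v (p, j) = 0 := by linear_combination h
      exact (mul_eq_zero.mp this).resolve_left hc
  funext r
  obtain ⟨p, j⟩ := r
  exact key (p : ℕ) p rfl j

lemma isUnit_A2_sub (m n : ℕ) (l2 : ℂ) (hl2 : l2 ≠ Complex.I / 2) :
    IsUnit (A2 m n - l2 • 1) := by
  have hc : Complex.I / 2 - l2 ≠ 0 := sub_ne_zero.mpr (Ne.symm hl2)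
  rw [Matrix.isUnit_iff_isUnit_det, isUnit_iff_ne_zero]
  intro hdet
  obtain ⟨v, hv0, hv⟩ := (Matrix.exists_mulVec_eq_zero_iff).mpr hdet
  apply hv0
  have key : ∀ k : ℕ, ∀ j : Fin m, (j : ℕ) = k → ∀ p : Fin n, v (p, j) = 0 := by
    intro k
    induction k using Nat.strong_induction_on with
    | _ k ih =>
      intro j hjk p
      have h := congrFun hv (p, j)
      rw [sub_mulVec] at h
      simp only [Pi.sub_apply, Pi.zero_apply, smul_mulVec, one_mulVec,
        Pi.smul_apply, smul_eq_mul] at h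
      rw [A2_mulVec] at h
      have hsum : ∑ l : Fin m, aC ((j : ℤ) - (l : ℤ)) * v (p, l)
          = Complex.I / 2 * v (p, j) := by
        rw [Finset.sum_eq_single j]
        · rw [sub_self, aC_zero]
        · intro l _ hl
          rcases lt_or_gt_of_ne (fun h' : (l : ℕ) = (j : ℕ) => hl (Fin.ext h'))
            with h' | h'
          · rw [ih (l : ℕ) (by omega) l rfl p, mul_zero]
          · rw [aC_neg (by omega), zero_mul]
        · intro h'; exact absurd (Finset.mem_univ j) h'
      rw [hsum] at h
      have : (Complex.I / 2 - l2) * v (p, j) = 0 := by linear_combination h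
      exact (mul_eq_zero.mp this).resolve_left hc
  funext r
  obtain ⟨p, j⟩ := r
  exact key (j : ℕ) j rfl p


/-- `(i/2−λ_2)(i/2−λ_1)(A_2−λ_2 I)^{-1}(A_1−λ_1 I)^{-1}𝟏 = h(ψ(λ_1), ψ(λ_2))`. -/
theorem resolvents_on_ones (m n : ℕ) (hm : 0 < m) (hn : 0 < n)
    (l1 l2 : ℂ) (hl1 : l1 ≠ Complex.I / 2) (hl2 : l2 ≠ Complex.I / 2) :
    IsUnit (A1 m n - l1 • 1) ∧ IsUnit (A2 m n - l2 • 1) ∧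
    ((Complex.I / 2 - l2) * (Complex.I / 2 - l1)) •
        (((A2 m n - l2 • 1)⁻¹ * (A1 m n - l1 • 1)⁻¹) *ᵥ onesV (Fin n × Fin m))
      = hVec m n (psiM l1) (psiM l2) := by
  have hc1 : Complex.I / 2 - l1 ≠ 0 := sub_ne_zero.mpr (Ne.symm hl1)
  have hc2 : Complex.I / 2 - l2 ≠ 0 := sub_ne_zero.mpr (Ne.symm hl2)
  have hu1 := isUnit_A1_sub m n l1 hl1
  have hu2 := isUnit_A2_sub m n l2 hl2
  refine ⟨hu1, hu2, ?_⟩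
  have hd1 : IsUnit (A1 m n - l1 • 1).det := (Matrix.isUnit_iff_isUnit_det _).mp hu1
  have hd2 : IsUnit (A2 m n - l2 • 1).det := (Matrix.isUnit_iff_isUnit_det _).mp hu2
  have hones : hVec m n 1 1 = onesV (Fin n × Fin m) := by
    funext r; simp [hVec, onesV]
  have e1 : (A1 m n - l1 • 1)⁻¹ *ᵥ onesV (Fin n × Fin m)
      = (Complex.I / 2 - l1)⁻¹ • hVec m n (psiM l1) 1 := by
    have h1 : (A1 m n - l1 • 1) *ᵥ hVec m n (psiM l1) 1
        = (Complex.I / 2 - l1) • onesV (Fin n × Fin m) := by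
      rw [A1_mulVec_h m n l1 hl1 1, hones]
    have h2 := congrArg (fun w => (A1 m n - l1 • 1)⁻¹ *ᵥ w) h1
    simp only [mulVec_mulVec, Matrix.nonsing_inv_mul _ hd1, one_mulVec,
      mulVec_smul] at h2
    rw [h2, smul_smul, inv_mul_cancel₀ hc1, one_smul]
  have e2 : (A2 m n - l2 • 1)⁻¹ *ᵥ hVec m n (psiM l1) 1
      = (Complex.I / 2 - l2)⁻¹ • hVec m n (psiM l1) (psiM l2) := by
    have h1 := A2_mulVec_h m n l2 hl2 (psiM l1)
    have h2 := congrArg (fun w => (A2 m n - l2 • 1)⁻¹ *ᵥ w) h1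
    simp only [mulVec_mulVec, Matrix.nonsing_inv_mul _ hd2, one_mulVec,
      mulVec_smul] at h2
    rw [h2, smul_smul, inv_mul_cancel₀ hc2, one_smul]
  rw [← mulVec_mulVec, e1, mulVec_smul, e2, smul_smul, smul_smul]
  have : (Complex.I / 2 - l2) * (Complex.I / 2 - l1) * (Complex.I / 2 - l1)⁻¹ *
      (Complex.I / 2 - l2)⁻¹ = 1 := by
    rw [mul_assoc ((Complex.I / 2 - l2)), mul_inv_cancel₀ hc1, mul_one,
      mul_inv_cancel₀ hc2]
  rw [this, one_smul]


end
end
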